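/- Let R be a binary relation on ℕ whose convolution language is regular, and suppose that (ℕ, R) is a directed tree. Then there exists a constant D > 0 such that for every pair (m, n) ∈ R with m ≥ D and n ≥ D, the column indices differ by at most one: |⌊m/D⌋ − ⌊n/D⌋| ≤ 1. (In the diagrammatic language: every long arrow must start or end in the leftmost column.) -/

import Mathlib

/-- The convolution word of the pair `(m, n)`, over the three-letter alphabet `Fin 3`
(`0` plays the role of `s`, `1` of `l`, `2` of `r`). -/
def convWord (m n : ℕ) : List (Fin 3) :=
  List.replicate (min m n) 0 ++ List.replicate (m - min m n) 1 ++
    List.replicate (n - min m n) 2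

/-- The convolution language of a binary relation on `ℕ`. -/
def convLang (R : ℕ → ℕ → Prop) : Language (Fin 3) :=
  {w | ∃ m n, R m n ∧ w = convWord m n}

/-- A binary relation on `ℕ` is regular if its convolution language is regular. -/
def RegularRel (R : ℕ → ℕ → Prop) : Prop :=
  (convLang R).IsRegular
/-- The underlying (simple, undirected) graph of a binary relation `η`. -/
def adjGraph {V : Type*} (η : V → V → Prop) : SimpleGraph V where
  Adj u v := u ≠ v ∧ (η u v ∨ η v u)
  symm := ⟨fun _ _ h => ⟨h.1.symm, h.2.symm⟩⟩
  loopless := ⟨fun _ h => h.1 rfl⟩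

/-- `η` is a directed tree if it is irreflexive, no pair is related in both
directions, and the underlying undirected graph is a tree. -/
def IsDirectedTree {V : Type*} (η : V → V → Prop) : Prop :=
  (∀ v, ¬ η v v) ∧ (∀ u v, ¬ (η u v ∧ η v u)) ∧ (adjGraph η).IsTree

/-- States repeat along a block of identical letters, giving a period. -/
lemma period_aux {σ : Type} [Fintype σ] (M : DFA (Fin 3) σ) (q0 : σ) (z : Fin 3) :
    ∃ d, 0 < d ∧ ∀ k, Fintype.card σ ≤ k → ∀ t,
      M.evalFrom q0 (List.replicate (k + t * d) z) = M.evalFrom q0 (List.replicate k z) := by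
  classical
  set c := Fintype.card σ with hc
  obtain ⟨i, j, hne, heq⟩ := Fintype.exists_ne_map_eq_of_card_lt
    (fun i : Fin (c + 1) => M.evalFrom q0 (List.replicate i z)) (by simp [hc])
  -- wlog i < j
  have key : ∀ (i j : Fin (c+1)), (i:ℕ) < (j:ℕ) →
      M.evalFrom q0 (List.replicate i z) = M.evalFrom q0 (List.replicate j z) →
      ∃ d, 0 < d ∧ ∀ k, c ≤ k → ∀ t,
        M.evalFrom q0 (List.replicate (k + t * d) z) = M.evalFrom q0 (List.replicate k z) := by
    intro i j hij heq
    refine ⟨(j:ℕ) - i, by omega, ?_⟩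
    have step : ∀ k, (i:ℕ) ≤ k →
        M.evalFrom q0 (List.replicate (k + ((j:ℕ) - i)) z) =
          M.evalFrom q0 (List.replicate k z) := by
      intro k hk
      have e1 : k + ((j:ℕ) - i) = (j:ℕ) + (k - i) := by omega
      have e2 : (i:ℕ) + (k - i) = k := by omega
      rw [e1, List.replicate_add, DFA.evalFrom_of_append, ← heq,
        ← DFA.evalFrom_of_append, ← List.replicate_add, e2]
    intro k hk t
    induction t with
    | zero => simp
    | succ t ih =>
      have e : k + (t + 1) * ((j:ℕ) - i) = (k + t * ((j:ℕ) - i)) + ((j:ℕ) - i) := by ring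
      rw [e, step _ (by have := i.isLt; omega), ih]
  rcases lt_or_gt_of_ne (fun h : (i:ℕ) = (j:ℕ) => hne (Fin.ext h)) with h | h
  · exact key i j h heq
  · exact key j i h heq.symm

/-- Pumping both blocks of a two-block word simultaneously with a common period. -/
lemma pump_two {σ : Type} [Fintype σ] (M : DFA (Fin 3) σ) (x y : Fin 3) (a b : ℕ)
    (ha : Fintype.card σ ≤ a) (hb : Fintype.card σ ≤ b)
    (h : List.replicate a x ++ List.replicate b y ∈ M.accepts) :
    ∃ D0, 0 < D0 ∧ ∀ t u : ℕ,
      List.replicate (a + t * D0) x ++ List.replicate (b + u * D0) y ∈ M.accepts := by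
  obtain ⟨d1, hd1, h1⟩ := period_aux M M.start x
  obtain ⟨d2, hd2, h2⟩ := period_aux M (M.evalFrom M.start (List.replicate a x)) y
  refine ⟨d1 * d2, Nat.mul_pos hd1 hd2, fun t u => ?_⟩
  rw [DFA.mem_accepts] at h ⊢
  have e : M.eval (List.replicate (a + t * (d1 * d2)) x ++ List.replicate (b + u * (d1 * d2)) y)
      = M.eval (List.replicate a x ++ List.replicate b y) := by
    show M.evalFrom M.start _ = M.evalFrom M.start _
    rw [DFA.evalFrom_of_append, DFA.evalFrom_of_append]
    have e1 : a + t * (d1 * d2) = a + (t * d2) * d1 := by ring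
    have e2 : b + u * (d1 * d2) = b + (u * d1) * d2 := by ring
    rw [e1, h1 a ha (t * d2), e2, h2 b hb (u * d1)]
  rwa [e]

lemma mem_left {R : ℕ → ℕ → Prop} {a b : ℕ}
    (h : (List.replicate a (0 : Fin 3) ++ List.replicate b 1) ∈ convLang R) :
    R (a + b) a := by
  obtain ⟨m, n, hR, hw⟩ := h
  have h0 := congrArg (List.count (0 : Fin 3)) hw
  have h1 := congrArg (List.count (1 : Fin 3)) hw
  have h2 := congrArg (List.count (2 : Fin 3)) hw
  simp [convWord, List.count_append, List.count_replicate] at h0 h1 h2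
  have hm : min m n ≤ m := min_le_left _ _
  have hn : min m n ≤ n := min_le_right _ _
  have hma : m = a + b := by omega
  have hna : n = a := by omega
  rwa [hma, hna] at hR

lemma mem_right {R : ℕ → ℕ → Prop} {a b : ℕ}
    (h : (List.replicate a (0 : Fin 3) ++ List.replicate b 2) ∈ convLang R) :
    R a (a + b) := by
  obtain ⟨m, n, hR, hw⟩ := h
  have h0 := congrArg (List.count (0 : Fin 3)) hw
  have h1 := congrArg (List.count (1 : Fin 3)) hw
  have h2 := congrArg (List.count (2 : Fin 3)) hw
  simp [convWord, List.count_append, List.count_replicate] at h0 h1 h2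
  have hm : min m n ≤ m := min_le_left _ _
  have hn : min m n ≤ n := min_le_right _ _
  have hma : m = a := by omega
  have hna : n = a + b := by omega
  rwa [hma, hna] at hR

/-- In an acyclic graph there cannot be two internally distinct paths of length 2. -/
lemma no_double_path {V : Type*} {G : SimpleGraph V} (hG : G.IsAcyclic) {a b c₁ c₂ : V}
    (h1 : G.Adj a c₁) (h2 : G.Adj c₁ b) (h3 : G.Adj a c₂) (h4 : G.Adj c₂ b)
    (hab : a ≠ b) (hc : c₁ ≠ c₂) : False := by
  have hp1 : (SimpleGraph.Walk.cons h1 (SimpleGraph.Walk.cons h2 SimpleGraph.Walk.nil)).IsPath := by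
    simp [SimpleGraph.Walk.isPath_def]
    exact ⟨⟨h1.ne, hab⟩, h2.ne⟩
  have hp2 : (SimpleGraph.Walk.cons h3 (SimpleGraph.Walk.cons h4 SimpleGraph.Walk.nil)).IsPath := by
    simp [SimpleGraph.Walk.isPath_def]
    exact ⟨⟨h3.ne, hab⟩, h4.ne⟩
  have := SimpleGraph.isAcyclic_iff_path_unique.mp hG ⟨_, hp1⟩ ⟨_, hp2⟩
  have hval := congrArg (fun p : G.Path a b => p.1.support) this
  simp at hval
  exact hc hval

theorem stmt16 (R : ℕ → ℕ → Prop) (hreg : RegularRel R) (htree : IsDirectedTree R) :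
    ∃ D : ℕ, 0 < D ∧ ∀ m n : ℕ, R m n → D ≤ m → D ≤ n →
      (((m / D : ℕ) : ℤ) - ((n / D : ℕ) : ℤ)).natAbs ≤ 1 := by
  obtain ⟨σ, hfin, M, hM⟩ := hreg
  set c := Fintype.card σ with hc
  refine ⟨c + 1, Nat.succ_pos _, ?_⟩
  set D := c + 1 with hD
  intro m n hR hm hn
  have hacyc : (adjGraph R).IsAcyclic := htree.2.2.IsAcyclic
  -- First show the distance bound |m - n| ≤ D.
  have hclose : m ≤ n + D ∧ n ≤ m + D := by
    constructor
    · by_contra hml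
      push_neg at hml
      -- m > n + D : pump the `l`-block
      have hword : List.replicate n (0 : Fin 3) ++ List.replicate (m - n) 1 ∈ M.accepts := by
        rw [hM]
        refine ⟨m, n, hR, ?_⟩
        have hmin : min m n = n := min_eq_right (by omega)
        simp [convWord, hmin, Nat.sub_self]
      obtain ⟨D0, hD0, hpump⟩ := pump_two M 0 1 n (m - n) (by omega) (by omega) hword
      have fact : ∀ t u : ℕ, R (n + t * D0 + (m - n + u * D0)) (n + t * D0) := by
        intro t u
        exact mem_left (by rw [← hM]; exact hpump t u)
      have r1 : R (m + D0) n := by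
        have h := fact 0 1
        have e1 : n + 0 * D0 + (m - n + 1 * D0) = m + D0 := by omega
        have e2 : n + 0 * D0 = n := by omega
        rwa [e1, e2] at h
      have r2 : R (m + D0) (n + D0) := by
        have h := fact 1 0
        have e1 : n + 1 * D0 + (m - n + 0 * D0) = m + D0 := by omega
        have e2 : n + 1 * D0 = n + D0 := by omega
        rwa [e1, e2] at h
      have r3 : R (m + 2 * D0) n := by
        have h := fact 0 2
        have e1 : n + 0 * D0 + (m - n + 2 * D0) = m + 2 * D0 := by omega
        have e2 : n + 0 * D0 = n := by omega
        rwa [e1, e2] at h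
      have r4 : R (m + 2 * D0) (n + D0) := by
        have h := fact 1 1
        have e1 : n + 1 * D0 + (m - n + 1 * D0) = m + 2 * D0 := by omega
        have e2 : n + 1 * D0 = n + D0 := by omega
        rwa [e1, e2] at h
      exact no_double_path hacyc
        (a := n) (b := n + D0) (c₁ := m + D0) (c₂ := m + 2 * D0)
        ⟨by omega, Or.inr r1⟩ ⟨by omega, Or.inl r2⟩
        ⟨by omega, Or.inr r3⟩ ⟨by omega, Or.inl r4⟩
        (by omega) (by omega)
    · by_contra hnl
      push_neg at hnl
      -- n > m + D : pump the `r`-block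
      have hword : List.replicate m (0 : Fin 3) ++ List.replicate (n - m) 2 ∈ M.accepts := by
        rw [hM]
        refine ⟨m, n, hR, ?_⟩
        have hmin : min m n = m := min_eq_left (by omega)
        simp [convWord, hmin, Nat.sub_self]
      obtain ⟨D0, hD0, hpump⟩ := pump_two M 0 2 m (n - m) (by omega) (by omega) hword
      have fact : ∀ t u : ℕ, R (m + t * D0) (m + t * D0 + (n - m + u * D0)) := by
        intro t u
        exact mem_right (by rw [← hM]; exact hpump t u)
      have r1 : R m (n + D0) := by
        have h := fact 0 1
        have e1 : m + 0 * D0 + (n - m + 1 * D0) = n + D0 := by omega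
        have e2 : m + 0 * D0 = m := by omega
        rwa [e1, e2] at h
      have r2 : R (m + D0) (n + D0) := by
        have h := fact 1 0
        have e1 : m + 1 * D0 + (n - m + 0 * D0) = n + D0 := by omega
        have e2 : m + 1 * D0 = m + D0 := by omega
        rwa [e1, e2] at h
      have r3 : R m (n + 2 * D0) := by
        have h := fact 0 2
        have e1 : m + 0 * D0 + (n - m + 2 * D0) = n + 2 * D0 := by omega
        have e2 : m + 0 * D0 = m := by omega
        rwa [e1, e2] at h
      have r4 : R (m + D0) (n + 2 * D0) := by
        have h := fact 1 1
        have e1 : m + 1 * D0 + (n - m + 1 * D0) = n + 2 * D0 := by omega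
        have e2 : m + 1 * D0 = m + D0 := by omega
        rwa [e1, e2] at h
      exact no_double_path hacyc
        (a := m) (b := m + D0) (c₁ := n + D0) (c₂ := n + 2 * D0)
        ⟨by omega, Or.inl r1⟩ ⟨by omega, Or.inr r2⟩
        ⟨by omega, Or.inl r3⟩ ⟨by omega, Or.inr r4⟩
        (by omega) (by omega)
  -- Now the arithmetic conclusion.
  have hDpos : 0 < D := Nat.succ_pos _
  have h1 : m / D ≤ n / D + 1 := by
    calc m / D ≤ (n + D) / D := Nat.div_le_div_right hclose.1
      _ = n / D + 1 := Nat.add_div_right n hDpos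
  have h2 : n / D ≤ m / D + 1 := by
    calc n / D ≤ (m + D) / D := Nat.div_le_div_right hclose.2
      _ = m / D + 1 := Nat.add_div_right m hDpos
  set A := m / D
  set B := n / D
  omega
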